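/- Let G be a connected graph on n vertices that is not a tree. Let Z_0 be the number of sink-free orientations of G and Z_1 the number of orientations of G having exactly one sink. Then Z_1 ≤ n(n-1)·Z_0. -/

import Mathlib

/-- `o : V → V → Bool` is an orientation of the graph `G`: every directed edge `u → v`
(`o u v = true`) is an edge of `G`, and every edge of `G` receives exactly one direction. -/
def IsOrientation {V : Type*} (G : SimpleGraph V) (o : V → V → Bool) : Prop :=
  (∀ u v, o u v = true → G.Adj u v) ∧ ∀ u v, G.Adj u v → o u v = !o v u

/-- `v` is a sink under orientation `o`: all edges incident to `v` point into `v`. -/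
def IsSink {V : Type*} (G : SimpleGraph V) (o : V → V → Bool) (v : V) : Prop :=
  ∀ u, G.Adj u v → o u v = true

namespace SFO

set_option linter.unusedSectionVars false

variable {V : Type*} [Fintype V]

def odeg (o : V → V → Bool) (x : V) : ℕ :=
  (Finset.univ.filter fun y => o x y = true).card

/-- A directed path toward `v` in orientation `o`:  `x k → x (k-1) → ⋯ → x 0 = v`,
with all interior vertices having out-degree exactly `1`. -/
def IsPathTo (o : V → V → Bool) (v : V) (k : ℕ) (x : ℕ → V) : Prop :=
  x 0 = v ∧ (∀ i j, i ≤ k → j ≤ k → x i = x j → i = j) ∧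
  (∀ i, i < k → o (x (i+1)) (x i) = true) ∧
  (∀ i, 0 < i → i < k → odeg o (x i) = 1)

open Classical in
/-- Reverse the orientation of the edges of the path `x`. -/
noncomputable def flipO (o : V → V → Bool) (k : ℕ) (x : ℕ → V) : V → V → Bool :=
  fun a b => if ∃ i, i < k ∧ x i = a ∧ x (i+1) = b then true
    else if ∃ i, i < k ∧ x i = b ∧ x (i+1) = a then false else o a b

variable {G : SimpleGraph V} {o : V → V → Bool} {v : V} {k : ℕ} {x : ℕ → V}

lemma orient_true_of_adj_not (ho : IsOrientation G o) {a b : V} (hadj : G.Adj a b)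
    (h : ¬ o a b = true) : o b a = true := by
  have := ho.2 a b hadj
  cases hob : o b a with
  | false => rw [hob] at this; simp at this; exact absurd this h
  | true => rfl

lemma not_both (hx : ∀ i j, i ≤ k → j ≤ k → x i = x j → i = j) {a b : V}
    (h1 : ∃ i, i < k ∧ x i = a ∧ x (i+1) = b) : ¬ ∃ i, i < k ∧ x i = b ∧ x (i+1) = a := by
  rintro ⟨j, hj, rfl, hj2⟩
  obtain ⟨i, hi, rfl, hi2⟩ := h1
  have e1 : i = j + 1 := hx i (j+1) hi.le hj hj2.symm
  have e2 : j = i + 1 := hx j (i+1) hj.le hi hi2.symm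
  omega

lemma flipO_orientation (ho : IsOrientation G o) (hp : IsPathTo o v k x)
    (hG : IsOrientation G o) : IsOrientation G (flipO o k x) := by
  obtain ⟨h0, hinj, hedge, hdeg⟩ := hp
  constructor
  · intro a b h
    unfold flipO at h
    split_ifs at h with h1 h2
    · obtain ⟨i, hi, rfl, rfl⟩ := h1
      exact (ho.1 _ _ (hedge i hi)).symm
    · exact ho.1 a b h
  · intro a b hadj
    unfold flipO
    by_cases h1 : ∃ i, i < k ∧ x i = a ∧ x (i+1) = b
    · rw [if_pos h1, if_neg (not_both hinj h1), if_pos h1]; rfl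
    · rw [if_neg h1]
      by_cases h2 : ∃ i, i < k ∧ x i = b ∧ x (i+1) = a
      · rw [if_pos h2, if_pos h2]; rfl
      · rw [if_neg h2, if_neg h2, if_neg h1]
        exact ho.2 a b hadj

end SFO

namespace SFO2
open SFO
variable {V : Type*} [Fintype V]
variable {G : SimpleGraph V} {o : V → V → Bool} {v : V} {k : ℕ} {x : ℕ → V}

lemma flipO_sinkFree (ho : IsOrientation G o) (hp : IsPathTo o v k x)
    (hk : 1 ≤ k) (hu : 2 ≤ odeg o (x k))
    (huniq : ∀ w, IsSink G o w → w = v) :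
    ∀ w, ¬ IsSink G (flipO o k x) w := by
  obtain ⟨h0, hinj, hedge, hdeg⟩ := hp
  intro w hw
  by_cases hwp : ∃ i, i ≤ k ∧ x i = w
  · obtain ⟨i, hik, rfl⟩ := hwp
    rcases Nat.lt_or_ge i k with hik' | hik'
    · -- x i has out-edge to x (i+1) in the flip
      have hadj : G.Adj (x (i+1)) (x i) := ho.1 _ _ (hedge i hik')
      have := hw _ hadj
      unfold flipO at this
      rw [if_neg, if_pos ⟨i, hik', rfl, rfl⟩] at this
      · exact absurd this (by simp)
      · rintro ⟨j, hj, hj1, hj2⟩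
        have e1 : j = i + 1 := hinj j (i+1) hj.le (by omega) hj1
        have e2 : j + 1 = i := hinj (j+1) i (by omega) hik hj2
        omega
    · have hik'' : i = k := le_antisymm hik hik'
      subst hik''
      -- x i had two out-neighbors; pick one different from x (i-1)
      obtain ⟨z1, hz1, z2, hz2, hz12⟩ := Finset.one_lt_card.mp hu
      simp only [Finset.mem_filter, Finset.mem_univ, true_and] at hz1 hz2
      obtain ⟨z, hz, hzne⟩ : ∃ z, o (x i) z = true ∧ z ≠ x (i-1) := by
        by_cases h : z1 = x (i-1)
        · exact ⟨z2, hz2, by rw [← h]; exact fun e => hz12 e.symm⟩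
        · exact ⟨z1, hz1, h⟩
      have hadj : G.Adj z (x i) := (ho.1 _ _ hz).symm
      have := hw _ hadj
      unfold flipO at this
      rw [if_neg, if_neg] at this
      · rw [ho.2 z (x i) hadj] at this
        simp [hz] at this
      · rintro ⟨j, hj, hj1, hj2⟩
        exact absurd (hinj j i hj.le le_rfl hj1) (by omega)
      · rintro ⟨j, hj, hj1, hj2⟩
        have hji : j + 1 = i := hinj (j+1) i (by omega) le_rfl hj2
        exact hzne (by rw [← hj1]; congr 1; omega)
  · -- w is not on the path, and w ≠ v, so w is not a sink in o
    have hwv : w ≠ v := fun h => hwp ⟨0, Nat.zero_le _, by rw [h0, h]⟩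
    have hns : ¬ IsSink G o w := fun h => hwv (huniq w h)
    unfold IsSink at hns
    push_neg at hns
    obtain ⟨z, hz, hzw⟩ := hns
    have := hw z hz
    unfold flipO at this
    split_ifs at this with h1 h2
    · obtain ⟨j, hj, hj1, hj2⟩ := h1
      exact hwp ⟨j+1, by omega, hj2⟩
    all_goals first | exact hzw this | simp at this


variable {o1 o2 : V → V → Bool} {k1 k2 : ℕ} {x1 x2 : ℕ → V}

lemma odeg_one_unique {o : V → V → Bool} {a b c : V} (h : odeg o a = 1)
    (h1 : o a b = true) (h2 : o a c = true) : b = c := by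
  have H := Finset.card_le_one.mp h.le
  exact H b (by simp [h1]) c (by simp [h2])

lemma sink_no_out (ho : IsOrientation G o) (hs : IsSink G o v) {z : V} :
    o v z = false := by
  by_contra h
  have h' : o v z = true := by simpa using h
  have hadj : G.Adj v z := ho.1 _ _ h'
  have := hs z hadj.symm
  rw [ho.2 v z hadj, this] at h'
  simp at h'

lemma flip_out_unique (ho : IsOrientation G o) (hp : IsPathTo o v k x)
    (hs : IsSink G o v) {i : ℕ} (hi : i < k) {z : V}
    (hz : flipO o k x (x i) z = true) : z = x (i+1) := by
  obtain ⟨h0, hinj, hedge, hdeg⟩ := hp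
  unfold flipO at hz
  split_ifs at hz with h1 h2
  · obtain ⟨j, hj, hj1, hj2⟩ := h1
    have : j = i := hinj j i hj.le hi.le hj1
    rw [← hj2, this]
  · rcases Nat.eq_zero_or_pos i with h | h
    · rw [h, h0] at hz
      rw [sink_no_out ho hs] at hz; simp at hz
    · have hd : odeg o (x i) = 1 := hdeg i h hi
      have hprev : o (x i) (x (i-1)) = true := by
        have := hedge (i-1) (by omega)
        have e : i - 1 + 1 = i := by omega
        rwa [e] at this
      have : z = x (i-1) := odeg_one_unique hd hz hprev
      exact absurd ⟨i-1, by omega, by rw [← this], by congr 1; omega⟩ h2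

lemma flipO_inj (ho1 : IsOrientation G o1) (ho2 : IsOrientation G o2)
    (hp1 : IsPathTo o1 v k1 x1) (hp2 : IsPathTo o2 v k2 x2)
    (hs1 : IsSink G o1 v) (hs2 : IsSink G o2 v)
    (hend : x1 k1 = x2 k2)
    (hf : flipO o1 k1 x1 = flipO o2 k2 x2) : o1 = o2 := by
  have key : ∀ i, i ≤ k1 → i ≤ k2 → x1 i = x2 i := by
    intro i
    induction i with
    | zero => intro _ _; rw [hp1.1, hp2.1]
    | succ i ih =>
      intro h1 h2
      have e := ih (by omega) (by omega)
      have t1 : flipO o1 k1 x1 (x1 i) (x1 (i+1)) = true := by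
        unfold flipO; rw [if_pos ⟨i, by omega, rfl, rfl⟩]
      rw [hf, e] at t1
      exact flip_out_unique ho2 hp2 hs2 (by omega) t1
  have hkk : k1 = k2 := by
    rcases le_total k1 k2 with h | h
    · have : x2 k1 = x2 k2 := by rw [← key k1 le_rfl h, hend]
      exact hp2.2.1 k1 k2 h le_rfl this
    · have : x1 k2 = x1 k1 := by rw [key k2 h le_rfl, ← hend]
      exact (hp1.2.1 k2 k1 h le_rfl this).symm
  have hiff : ∀ a b : V, (∃ i, i < k1 ∧ x1 i = a ∧ x1 (i+1) = b) ↔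
      (∃ i, i < k2 ∧ x2 i = a ∧ x2 (i+1) = b) := by
    intro a b
    constructor
    · rintro ⟨i, hi, rfl, rfl⟩
      exact ⟨i, by omega, (key i (by omega) (by omega)).symm, (key (i+1) (by omega) (by omega)).symm⟩
    · rintro ⟨i, hi, rfl, rfl⟩
      exact ⟨i, by omega, key i (by omega) (by omega), key (i+1) (by omega) (by omega)⟩
  funext a b
  by_cases hP : ∃ i, i < k1 ∧ x1 i = a ∧ x1 (i+1) = b
  · -- a → b is a flipped pair: in o1 and o2, the edge goes b → a
    have hP2 := (hiff a b).mp hP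
    obtain ⟨i, hi, hia, hib⟩ := hP
    obtain ⟨j, hj, hja, hjb⟩ := hP2
    have e1 : o1 b a = true := by rw [← hia, ← hib]; exact hp1.2.2.1 i hi
    have e2 : o2 b a = true := by rw [← hja, ← hjb]; exact hp2.2.2.1 j hj
    have a1 : G.Adj a b := (ho1.1 _ _ e1).symm
    rw [ho1.2 a b a1, ho2.2 a b a1, e1, e2]
  · by_cases hQ : ∃ i, i < k1 ∧ x1 i = b ∧ x1 (i+1) = a
    · have hQ2 := (hiff b a).mp hQ
      obtain ⟨i, hi, hia, hib⟩ := hQ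
      obtain ⟨j, hj, hja, hjb⟩ := hQ2
      have e1 : o1 a b = true := by rw [← hia, ← hib]; exact hp1.2.2.1 i hi
      have e2 : o2 a b = true := by rw [← hja, ← hjb]; exact hp2.2.2.1 j hj
      rw [e1, e2]
    · have : flipO o1 k1 x1 a b = flipO o2 k2 x2 a b := by rw [hf]
      unfold flipO at this
      rw [if_neg hP, if_neg hQ, if_neg, if_neg] at this
      · exact this
      · exact fun h => hQ ((hiff b a).mpr h)
      · exact fun h => hP ((hiff a b).mpr h)

inductive Reaches (o : V → V → Bool) (v : V) : V → Prop
  | refl : Reaches o v v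
  | step {w z : V} : o w z = true → (z = v ∨ odeg o z = 1) → Reaches o v z → Reaches o v w

lemma reaches_path {w : V} (hr : Reaches o v w) :
    ∃ k x, IsPathTo o v k x ∧ x k = w := by
  induction hr with
  | refl =>
    exact ⟨0, fun _ => v, ⟨rfl, fun i j hi hj _ => by omega,
      fun i hi => by omega, fun i hi1 hi2 => by omega⟩, rfl⟩
  | @step w z hwz hcond hz ih =>
    obtain ⟨k, x, ⟨h0, hinj, hedge, hdeg⟩, hxk⟩ := ih
    by_cases hw : ∃ j, j ≤ k ∧ x j = w
    · obtain ⟨j, hj, hxj⟩ := hw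
      exact ⟨j, x, ⟨h0, fun i i' hi hi' => hinj i i' (by omega) (by omega),
        fun i hi => hedge i (by omega), fun i hi1 hi2 => hdeg i hi1 (by omega)⟩, hxj⟩
    · refine ⟨k+1, fun i => if i ≤ k then x i else w, ⟨?_, ?_, ?_, ?_⟩, ?_⟩
      · simpa using h0
      · intro i j hi hj hij
        by_cases hik : i ≤ k <;> by_cases hjk : j ≤ k <;> simp [hik, hjk] at hij
        · exact hinj i j hik hjk hij
        · exact absurd ⟨i, hik, hij⟩ hw
        · exact absurd ⟨j, hjk, hij.symm⟩ hw
        · omega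
      · intro i hi
        by_cases hik : i < k
        · simp only [if_pos (by omega : i ≤ k), if_pos (by omega : i + 1 ≤ k)]
          exact hedge i hik
        · have : i = k := by omega
          subst this
          simp only [if_pos le_rfl, if_neg (by omega : ¬ i + 1 ≤ i)]
          rwa [hxk]
      · intro i hi1 hi2
        by_cases hik : i < k
        · simp only [if_pos (by omega : i ≤ k)]
          exact hdeg i hi1 hik
        · have : i = k := by omega
          subst this
          simp only [if_pos le_rfl]
          rcases hcond with h | h
          · exfalso
            have : i = 0 := hinj i 0 le_rfl (by omega) (by rw [hxk, h, h0])
            omega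
          · rwa [hxk]
      · simp

lemma support_getElem? {u w : V} (p : G.Walk u w) :
    ∀ i, i ≤ p.length → p.support[i]? = some (p.getVert i) := by
  induction p with
  | nil =>
    intro i hi
    have : i = 0 := by simpa using hi
    subst this
    simp [SimpleGraph.Walk.getVert]
  | cons h q ih =>
    intro i hi
    cases i with
    | zero => simp [SimpleGraph.Walk.getVert]
    | succ i =>
      simp only [SimpleGraph.Walk.support_cons, List.getElem?_cons_succ,
        SimpleGraph.Walk.getVert_cons_succ]
      exact ih i (by simpa [SimpleGraph.Walk.length_cons] using hi)

lemma exists_goodpath (hconn : G.Connected) (hcyc : ¬ G.IsAcyclic)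
    (ho : IsOrientation G o) (hs : IsSink G o v) (huniq : ∀ w, IsSink G o w → w = v) :
    ∃ k x, IsPathTo o v k x ∧ 1 ≤ k ∧ 2 ≤ odeg o (x k) := by
  classical
  by_contra hno
  push_neg at hno
  -- Step a : every vertex ≠ v reachable to v has out-degree exactly 1
  have hdeg1 : ∀ w, Reaches o v w → w ≠ v → odeg o w = 1 := by
    intro w hr hwv
    have hge : 1 ≤ odeg o w := by
      have hns : ¬ IsSink G o w := fun h => hwv (huniq w h)
      unfold IsSink at hns; push_neg at hns
      obtain ⟨z, hz, hzw⟩ := hns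
      have : o w z = true := orient_true_of_adj_not ho hz hzw
      exact Finset.card_pos.mpr ⟨z, by simp [this]⟩
    by_contra hne
    have h2 : 2 ≤ odeg o w := by omega
    obtain ⟨k, x, hp, hxk⟩ := reaches_path hr
    have hk : 1 ≤ k := by
      rcases Nat.eq_zero_or_pos k with h | h
      · exact absurd (by rw [← hxk, h, hp.1]) hwv
      · exact h
    have := hno k x hp hk
    rw [hxk] at this
    omega
  -- Step b : reachability is closed under adjacency
  have hcl : ∀ a b, G.Adj a b → Reaches o v b → Reaches o v a := by
    intro a b hab hb
    cases hoab : o a b with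
    | true =>
      refine Reaches.step hoab ?_ hb
      by_cases h : b = v
      · exact Or.inl h
      · exact Or.inr (hdeg1 b hb h)
    | false =>
      have hba : o b a = true := orient_true_of_adj_not ho hab (by simp [hoab])
      have hbv : b ≠ v := by
        rintro rfl
        rw [sink_no_out ho hs] at hba; simp at hba
      have hd : odeg o b = 1 := hdeg1 b hb hbv
      cases hb with
      | refl => exact absurd rfl hbv
      | step hbz hcond hz =>
        have := odeg_one_unique hd hba hbz
        rwa [this]
  -- Step c : every vertex reaches v
  have hall : ∀ a, Reaches o v a := by
    have aux : ∀ (a b : V) (p : G.Walk a b), Reaches o v b → Reaches o v a := by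
      intro a b p
      induction p with
      | nil => exact id
      | cons h q ih => exact fun hb => hcl _ _ h (ih hb)
    intro a
    obtain ⟨p⟩ := hconn a v
    exact aux a v p Reaches.refl
  -- the successor function
  have hf : ∀ w, w ≠ v → ∃ z, o w z = true ∧ ∀ z', o w z' = true → z' = z := by
    intro w hwv
    have hd : odeg o w = 1 := hdeg1 w (hall w) hwv
    obtain ⟨z, hz⟩ := Finset.card_eq_one.mp hd
    refine ⟨z, ?_, ?_⟩
    · have : z ∈ Finset.univ.filter fun y => o w y = true := by rw [hz]; simp
      simpa using this
    · intro z' hz'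
      have : z' ∈ Finset.univ.filter fun y => o w y = true := by simp [hz']
      rw [hz] at this; simpa using this
  set f : V → V := fun w => if h : w = v then v else Classical.choose (hf w h) with hfdef
  have hfspec : ∀ w (h : w ≠ v), o w (f w) = true ∧ ∀ z', o w z' = true → z' = f w := by
    intro w h
    simp only [hfdef, dif_neg h]
    exact Classical.choose_spec (hf w h)
  have hiter : ∀ w, ∃ j, f^[j] w = v := by
    intro w
    induction hall w with
    | refl => exact ⟨0, rfl⟩
    | @step w z hwz hcond hz ih =>
      obtain ⟨j, hj⟩ := ih
      by_cases h : w = v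
      · exact ⟨0, h⟩
      · have : f w = z := ((hfspec w h).2 z hwz).symm
        exact ⟨j + 1, by rw [Function.iterate_succ_apply, this, hj]⟩
  set d : V → ℕ := fun w => Nat.find (hiter w) with hddef
  have hrec : ∀ w, w ≠ v → d w = d (f w) + 1 := by
    intro w hwv
    have h1 : f^[d w] w = v := Nat.find_spec (hiter w)
    have h2 : d w ≠ 0 := by
      intro h
      rw [h] at h1
      exact hwv h1
    obtain ⟨m, hm⟩ : ∃ m, d w = m + 1 := ⟨d w - 1, by omega⟩
    have h3 : f^[m] (f w) = v := by
      have h1' := h1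
      rw [hm, Function.iterate_succ_apply] at h1'
      exact h1'
    have h4 : d (f w) ≤ m := Nat.find_le h3
    have h5 : d w ≤ d (f w) + 1 := by
      apply Nat.find_le
      rw [Function.iterate_succ_apply]
      exact Nat.find_spec (hiter (f w))
    omega
  have hE : ∀ a b, G.Adj a b → (f a = b ∧ d a = d b + 1) ∨ (f b = a ∧ d b = d a + 1) := by
    intro a b hab
    cases hoab : o a b with
    | true =>
      have hav : a ≠ v := by
        rintro rfl; rw [sink_no_out ho hs] at hoab; simp at hoab
      have hfa : f a = b := ((hfspec a hav).2 b hoab).symm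
      exact Or.inl ⟨hfa, by rw [hrec a hav, hfa]⟩
    | false =>
      have hba : o b a = true := orient_true_of_adj_not ho hab (by simp [hoab])
      have hbv : b ≠ v := by
        rintro rfl; rw [sink_no_out ho hs] at hba; simp at hba
      have hfb : f b = a := ((hfspec b hbv).2 a hba).symm
      exact Or.inr ⟨hfb, by rw [hrec b hbv, hfb]⟩
  -- now use a cycle to get a contradiction
  simp only [SimpleGraph.IsAcyclic] at hcyc
  push_neg at hcyc
  obtain ⟨a, c, hc⟩ := hcyc
  obtain ⟨y, hyS, hymax⟩ := Finset.exists_max_image c.support.toFinset d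
    ⟨a, List.mem_toFinset.mpr c.start_mem_support⟩
  have hy : y ∈ c.support := List.mem_toFinset.mp hyS
  set c' : G.Walk y y := c.rotate y hy with hc'def
  have hc' : c'.IsCycle := hc.rotate hy
  set m : ℕ := c'.length with hmdef
  have hm : 3 ≤ m := hc'.three_le_length
  set z1 : V := c'.getVert 1 with hz1def
  set z2 : V := c'.getVert (m - 1) with hz2def
  have adj1 : G.Adj y z1 := by
    have := c'.adj_getVert_succ (by omega : 0 < c'.length)
    rwa [c'.getVert_zero] at this
  have adj2 : G.Adj z2 y := by
    have := c'.adj_getVert_succ (by omega : m - 1 < c'.length)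
    rwa [(by omega : m - 1 + 1 = m), c'.getVert_length] at this
  -- z1 and z2 are in the support of c (hence of S)
  have htail : ∀ i, i + 1 ≤ m → c'.getVert (i+1) ∈ c'.support.tail := by
    intro i hi
    have h1 : c'.support[i+1]? = some (c'.getVert (i+1)) := support_getElem? c' (i+1) hi
    rw [c'.support_eq_cons, List.getElem?_cons_succ] at h1
    obtain ⟨hlt, he⟩ := List.getElem?_eq_some_iff.mp h1
    rw [← he]
    exact List.getElem_mem hlt
  have hz1t : z1 ∈ c'.support.tail := htail 0 (by omega)
  have hz2t : z2 ∈ c'.support.tail := by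
    have := htail (m - 2) (by omega)
    rwa [(by omega : m - 2 + 1 = m - 1)] at this
  have hrot := SimpleGraph.Walk.support_rotate c y hy
  have hz1S : z1 ∈ c.support.toFinset := by
    rw [List.mem_toFinset]
    exact List.mem_of_mem_tail (hrot.mem_iff.mp hz1t)
  have hz2S : z2 ∈ c.support.toFinset := by
    rw [List.mem_toFinset]
    exact List.mem_of_mem_tail (hrot.mem_iff.mp hz2t)
  have hne : z1 ≠ z2 := by
    intro h
    have hnd : c'.support.tail.Nodup := hc'.support_nodup
    have hlen : c'.support.tail.length = m := by
      have := c'.length_support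
      simp [List.length_tail, this, hmdef]
    have e1 : c'.support.tail[0]? = some z1 := by
      have h1 := support_getElem? c' 1 (by omega)
      rw [c'.support_eq_cons] at h1
      have h1' : (y :: c'.support.tail)[0 + 1]? = some z1 := h1
      rwa [List.getElem?_cons_succ] at h1'
    have e2 : c'.support.tail[m-2]? = some z2 := by
      have h1 := support_getElem? c' (m - 1) (by omega)
      rw [c'.support_eq_cons] at h1
      have h1' : (y :: c'.support.tail)[(m - 2) + 1]? = some z2 := by
        rw [(by omega : m - 2 + 1 = m - 1)]; exact h1
      rwa [List.getElem?_cons_succ] at h1'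
    have : (0 : ℕ) = m - 2 := by
      apply (List.getElem?_inj (i := 0) (j := m - 2) (by omega) hnd).mp
      rw [e1, e2, h]
    omega
  -- y has maximal d, but one of its two cycle neighbours must have larger d
  have hfy1 : f y = z1 := by
    rcases hE y z1 adj1 with ⟨h1, _⟩ | ⟨_, h2⟩
    · exact h1
    · exact absurd (hymax z1 hz1S) (by omega)
  have hfy2 : f y = z2 := by
    rcases hE z2 y adj2 with ⟨_, h2⟩ | ⟨h1, _⟩
    · exact absurd (hymax z2 hz2S) (by omega)
    · exact h1
  exact hne (by rw [← hfy1, ← hfy2])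

end SFO2

theorem stmt5 {V : Type*} [Fintype V] (G : SimpleGraph V)
    (hconn : G.Connected) (hcyc : ¬ G.IsAcyclic) :
    Nat.card {o : V → V → Bool // IsOrientation G o ∧ ∃! v, IsSink G o v}
      ≤ Fintype.card V * (Fintype.card V - 1) *
        Nat.card {o : V → V → Bool // IsOrientation G o ∧ ∀ v, ¬ IsSink G o v} := by
  classical
  have key : ∀ (o : V → V → Bool), IsOrientation G o → (∃! w, IsSink G o w) →
      ∃ v k x, SFO.IsPathTo o v k x ∧ 1 ≤ k ∧ 2 ≤ SFO.odeg o (x k) ∧ IsSink G o v ∧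
        (∀ w, IsSink G o w → w = v) := by
    intro o ho hex
    obtain ⟨v, hv, hu⟩ := hex
    obtain ⟨k, x, hp, hk, hdeg⟩ := SFO2.exists_goodpath hconn hcyc ho hv (fun w hw => hu w hw)
    exact ⟨v, k, x, hp, hk, hdeg, hv, fun w hw => hu w hw⟩
  choose v k x hp hk hdeg hsink huniq using key
  set A := {o : V → V → Bool // IsOrientation G o ∧ ∃! v, IsSink G o v} with hA
  set B := {o : V → V → Bool // IsOrientation G o ∧ ∀ v, ¬ IsSink G o v} with hB
  set F : A → ({p : V × V // p.1 ≠ p.2} × B) := fun s =>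
    ⟨⟨(x s.1 s.2.1 s.2.2 (k s.1 s.2.1 s.2.2), v s.1 s.2.1 s.2.2), by
        intro h
        have hp' := hp s.1 s.2.1 s.2.2
        have h0 := hp'.1
        have h' : x s.1 s.2.1 s.2.2 (k s.1 s.2.1 s.2.2) = v s.1 s.2.1 s.2.2 := h
        have := hp'.2.1 (k s.1 s.2.1 s.2.2) 0 le_rfl (Nat.zero_le _) (by rw [h0]; exact h')
        have := hk s.1 s.2.1 s.2.2
        omega⟩,
      ⟨SFO.flipO s.1 (k s.1 s.2.1 s.2.2) (x s.1 s.2.1 s.2.2),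
        SFO.flipO_orientation s.2.1 (hp s.1 s.2.1 s.2.2) s.2.1,
        SFO2.flipO_sinkFree s.2.1 (hp s.1 s.2.1 s.2.2) (hk s.1 s.2.1 s.2.2)
          (hdeg s.1 s.2.1 s.2.2) (huniq s.1 s.2.1 s.2.2)⟩⟩ with hF
  have hFinj : Function.Injective F := by
    intro s1 s2 h
    rw [hF] at h
    simp only [Prod.mk.injEq, Subtype.mk.injEq, Prod.mk.injEq] at h
    obtain ⟨⟨hu12, hv12⟩, hflip⟩ := h
    have hflip' := congrArg Subtype.val hflip
    apply Subtype.ext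
    refine SFO2.flipO_inj s1.2.1 s2.2.1 (hp s1.1 s1.2.1 s1.2.2) ?_
      (hsink s1.1 s1.2.1 s1.2.2) ?_ ?_ hflip'
    · rw [hv12]; exact hp s2.1 s2.2.1 s2.2.2
    · rw [hv12]; exact hsink s2.1 s2.2.1 s2.2.2
    · exact hu12
  have hle : Nat.card A ≤ Nat.card ({p : V × V // p.1 ≠ p.2} × B) :=
    Nat.card_le_card_of_injective F hFinj
  rw [Nat.card_prod] at hle
  have hcard : Nat.card {p : V × V // p.1 ≠ p.2}
      = Fintype.card V * (Fintype.card V - 1) := by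
    rw [Nat.card_eq_fintype_card, Fintype.card_subtype]
    have he : (Finset.univ.filter fun p : V × V => p.1 ≠ p.2) = Finset.univ.offDiag := by
      ext p; simp [Finset.mem_offDiag]
    rw [he, Finset.offDiag_card, Finset.card_univ]
    rcases Nat.eq_zero_or_pos (Fintype.card V) with h | h
    · simp [h]
    · obtain ⟨n', hn⟩ : ∃ n', Fintype.card V = n' + 1 := ⟨Fintype.card V - 1, by omega⟩
      rw [hn]
      rw [Nat.succ_sub_one, Nat.mul_succ, Nat.add_sub_cancel]
  rw [hcard] at hle
  exact hle
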